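/- Let $\mathcal{C}:\mathbb{R}^N\to\mathbb{R}$ be twice continuously differentiable and let $h_t$ solve $\partial_t h_t = -\nabla\mathcal{C}(h_t)$ on $[0,T]$ with $\nabla\mathcal{C}(h_t)\ne 0$ for all $t\in[0,T]$. Then $\int_0^T \Delta\mathcal{C}(h_t)\,\mathrm{d}t = \log\frac{\|\nabla\mathcal{C}(h_0)\|}{\|\nabla\mathcal{C}(h_T)\|} + \int_0^T \nabla\cdot\Big(\frac{\nabla\mathcal{C}(h_t)}{\|\nabla\mathcal{C}(h_t)\|}\Big)\,\|\nabla\mathcal{C}(h_t)\|\,\mathrm{d}t$. -/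

import Mathlib

open InnerProductSpace RealInnerProductSpace

/-- Laplacian of a function on Euclidean space: sum of second partial derivatives. -/
noncomputable def laplacian {ι : Type*} [Fintype ι] [DecidableEq ι]
    (C : EuclideanSpace ℝ ι → ℝ) (h : EuclideanSpace ℝ ι) : ℝ :=
  ∑ i, fderiv ℝ (fun x => fderiv ℝ C x (EuclideanSpace.single i 1)) h
        (EuclideanSpace.single i 1)

/-- Divergence of a vector field on Euclidean space. -/
noncomputable def divergence {ι : Type*} [Fintype ι] [DecidableEq ι]
    (v : EuclideanSpace ℝ ι → EuclideanSpace ℝ ι) (h : EuclideanSpace ℝ ι) : ℝ :=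
  ∑ i, fderiv ℝ (fun x => v x i) h (EuclideanSpace.single i 1)

section Aux

variable {N : ℕ} {g : EuclideanSpace ℝ (Fin N) → EuclideanSpace ℝ (Fin N)}
  {x : EuclideanSpace ℝ (Fin N)}

/-- Derivative of the norm of a vector field at a point where it does not vanish. -/
lemma norm_hasFDeriv (hg : HasFDerivAt g (fderiv ℝ g x) x) (hx : g x ≠ 0) :
    HasFDerivAt (fun y => ‖g y‖)
      ((1 / (2 * ‖g x‖)) • ((fderivInnerCLM ℝ (g x, g x)).comp
        ((fderiv ℝ g x).prod (fderiv ℝ g x)))) x := by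
  have hq : HasFDerivAt (fun y => ⟪g y, g y⟫)
      ((fderivInnerCLM ℝ (g x, g x)).comp ((fderiv ℝ g x).prod (fderiv ℝ g x))) x :=
    hg.inner ℝ hg
  have hq0 : ⟪g x, g x⟫ ≠ 0 := by
    rw [real_inner_self_eq_norm_sq]
    exact pow_ne_zero _ (norm_ne_zero_iff.mpr hx)
  have hs := (Real.hasDerivAt_sqrt hq0).comp_hasFDerivAt x hq
  have heq : (fun y => Real.sqrt ⟪g y, g y⟫) = fun y => ‖g y‖ := by
    funext y
    rw [real_inner_self_eq_norm_sq, Real.sqrt_sq (norm_nonneg _)]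
  have hval : Real.sqrt ⟪g x, g x⟫ = ‖g x‖ := by
    rw [real_inner_self_eq_norm_sq, Real.sqrt_sq (norm_nonneg _)]
  rw [show ((√·) ∘ fun y => ⟪g y, g y⟫) = fun y => Real.sqrt ⟪g y, g y⟫ from rfl, heq, hval] at hs
  exact hs

lemma coord_hasFDeriv (hg : HasFDerivAt g (fderiv ℝ g x) x) (i : Fin N) :
    HasFDerivAt (fun y => g y i) ((EuclideanSpace.proj (𝕜 := ℝ) i).comp (fderiv ℝ g x)) x := by
  exact (EuclideanSpace.proj (𝕜 := ℝ) i).hasFDerivAt.comp x hg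

lemma clm_eq_sum_coord (L : EuclideanSpace ℝ (Fin N) →L[ℝ] ℝ)
    (v : EuclideanSpace ℝ (Fin N)) :
    ∑ i, v i * L (EuclideanSpace.single i 1) = L v := by
  have hv : ∑ i, v i • (EuclideanSpace.single i 1 : EuclideanSpace ℝ (Fin N)) = v := by
    simpa [EuclideanSpace.basisFun_apply, EuclideanSpace.basisFun_repr] using
      (EuclideanSpace.basisFun (Fin N) ℝ).sum_repr v
  conv_rhs => rw [← hv]
  rw [map_sum]
  simp [smul_eq_mul]

lemma div_eq_sum (hg : HasFDerivAt g (fderiv ℝ g x) x) :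
    divergence g x = ∑ i, fderiv ℝ g x (EuclideanSpace.single i 1) i := by
  unfold divergence
  refine Finset.sum_congr rfl fun i _ => ?_
  rw [(coord_hasFDeriv hg i).fderiv]
  rfl

/-- Product-rule decomposition of the divergence of the unit vector field `g/‖g‖`. -/
lemma div_identity (hg : HasFDerivAt g (fderiv ℝ g x) x) (hx : g x ≠ 0) :
    divergence (fun y => ‖g y‖⁻¹ • g y) x * ‖g x‖
      = divergence g x - ⟪g x, fderiv ℝ g x (g x)⟫ / ‖g x‖ ^ 2 := by
  have hnz : ‖g x‖ ≠ 0 := norm_ne_zero_iff.mpr hx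
  set Dg := fderiv ℝ g x with hDg
  set Np := (1 / (2 * ‖g x‖)) • ((fderivInnerCLM ℝ (g x, g x)).comp (Dg.prod Dg)) with hNp
  have hn : HasFDerivAt (fun y => ‖g y‖) Np x := norm_hasFDeriv hg hx
  have hinv : HasFDerivAt (fun y => ‖g y‖⁻¹) ((-(‖g x‖ ^ 2)⁻¹) • Np) x := by
    exact (hasDerivAt_inv hnz).comp_hasFDerivAt x hn
  set R := (-(‖g x‖ ^ 2)⁻¹) • Np with hR
  have hmul : ∀ i, HasFDerivAt (fun y => ‖g y‖⁻¹ * g y i)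
      (‖g x‖⁻¹ • ((EuclideanSpace.proj (𝕜 := ℝ) i).comp Dg) + g x i • R) x :=
    fun i => hinv.mul (coord_hasFDeriv hg i)
  have hdiv : divergence (fun y => ‖g y‖⁻¹ • g y) x
      = ∑ i, (‖g x‖⁻¹ * (Dg (EuclideanSpace.single i 1) i)
          + g x i * R (EuclideanSpace.single i 1)) := by
    unfold divergence
    refine Finset.sum_congr rfl fun i _ => ?_
    have hfun : (fun y => (‖g y‖⁻¹ • g y) i) = fun y => ‖g y‖⁻¹ * g y i := rfl
    rw [hfun, (hmul i).fderiv]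
    simp
  have hRp : R (g x) = -(‖g x‖ ^ 2)⁻¹ * ((1 / (2 * ‖g x‖)) * (2 * ⟪g x, Dg (g x)⟫)) := by
    rw [hR, hNp, ContinuousLinearMap.smul_apply, ContinuousLinearMap.smul_apply,
      ContinuousLinearMap.comp_apply, ContinuousLinearMap.prod_apply, fderivInnerCLM_apply,
      real_inner_comm (Dg (g x)) (g x), smul_eq_mul, smul_eq_mul]
    ring
  rw [hdiv, Finset.sum_add_distrib, ← Finset.mul_sum, clm_eq_sum_coord R (g x),
    ← div_eq_sum hg, hRp]
  field_simp
  ring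

/-- Derivative of `log ‖g (h t)‖` along a gradient-flow-type trajectory. -/
lemma log_norm_hasDerivAt {h : ℝ → EuclideanSpace ℝ (Fin N)} {t : ℝ}
    (hg : HasFDerivAt g (fderiv ℝ g (h t)) (h t))
    (hh : HasDerivAt h (-(g (h t))) t) (hx : g (h t) ≠ 0) :
    HasDerivAt (fun s => Real.log ‖g (h s)‖)
      (-(⟪g (h t), fderiv ℝ g (h t) (g (h t))⟫ / ‖g (h t)‖ ^ 2)) t := by
  have hnz : ‖g (h t)‖ ≠ 0 := norm_ne_zero_iff.mpr hx
  have hG : HasDerivAt (fun s => g (h s)) (fderiv ℝ g (h t) (-(g (h t)))) t :=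
    hg.comp_hasDerivAt t hh
  have hq : HasDerivAt (fun s => ⟪g (h s), g (h s)⟫)
      (⟪g (h t), fderiv ℝ g (h t) (-(g (h t)))⟫
        + ⟪fderiv ℝ g (h t) (-(g (h t))), g (h t)⟫) t := hG.inner ℝ hG
  have hq0 : ⟪g (h t), g (h t)⟫ ≠ 0 := by
    rw [real_inner_self_eq_norm_sq]
    exact pow_ne_zero _ hnz
  have hlog := ((Real.hasDerivAt_log hq0).comp t hq).div_const 2
  have hfeq : (fun s => Real.log ⟪g (h s), g (h s)⟫ / 2)
      = fun s => Real.log ‖g (h s)‖ := by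
    funext s
    rw [real_inner_self_eq_norm_sq, Real.log_pow]
    push_cast
    ring
  rw [show ((Real.log ∘ fun s => ⟪g (h s), g (h s)⟫) = fun s => Real.log ⟪g (h s), g (h s)⟫)
    from rfl] at hlog
  rw [hfeq] at hlog
  convert hlog using 1
  · rfl
  · rfl
  rw [map_neg, inner_neg_right, inner_neg_left,
    real_inner_comm (fderiv ℝ g (h t) (g (h t))) (g (h t)), real_inner_self_eq_norm_sq]
  field_simp
  ring

lemma grad_contDiff {C : EuclideanSpace ℝ (Fin N) → ℝ} (hC : ContDiff ℝ 2 C) :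
    ContDiff ℝ 1 (gradient C) := by
  have : gradient C = fun x => (toDual ℝ _).symm (fderiv ℝ C x) := rfl
  rw [this]
  exact (toDual ℝ _).symm.contDiff.comp (hC.fderiv_right (by norm_num))

lemma grad_coord (C : EuclideanSpace ℝ (Fin N) → ℝ) (y : EuclideanSpace ℝ (Fin N))
    (i : Fin N) : fderiv ℝ C y (EuclideanSpace.single i 1) = gradient C y i := by
  rw [show fderiv ℝ C y (EuclideanSpace.single i 1) = ⟪gradient C y, EuclideanSpace.single i 1⟫
      from (InnerProductSpace.toDual_symm_apply).symm]
  simpa using EuclideanSpace.inner_single_right (𝕜 := ℝ) i 1 (gradient C y)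

lemma laplacian_eq_div_grad (C : EuclideanSpace ℝ (Fin N) → ℝ)
    (x : EuclideanSpace ℝ (Fin N)) : laplacian C x = divergence (gradient C) x := by
  unfold laplacian divergence
  refine Finset.sum_congr rfl fun i _ => ?_
  have : (fun y => fderiv ℝ C y (EuclideanSpace.single i 1))
      = fun y => gradient C y i := funext fun y => grad_coord C y i
  rw [this]

end Aux

/-- Decomposition of the Laplacian's integral along a gradient-flow trajectory
(equation (5) of the paper). -/
theorem laplacian_integral_decomposition
    {N : ℕ} (C : EuclideanSpace ℝ (Fin N) → ℝ) (hC : ContDiff ℝ 2 C)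
    (T : ℝ) (hT : 0 < T) (h : ℝ → EuclideanSpace ℝ (Fin N))
    (hflow : ∀ t ∈ Set.Icc (0:ℝ) T, HasDerivAt h (-(gradient C (h t))) t)
    (hne : ∀ t ∈ Set.Icc (0:ℝ) T, gradient C (h t) ≠ 0) :
    (∫ t in (0:ℝ)..T, laplacian C (h t))
      = Real.log (‖gradient C (h 0)‖ / ‖gradient C (h T)‖)
        + ∫ t in (0:ℝ)..T,
            divergence (fun x => ‖gradient C x‖⁻¹ • gradient C x) (h t)
              * ‖gradient C (h t)‖ := by
  have hg1 : ContDiff ℝ 1 (gradient C) := grad_contDiff hC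
  have hgd : ∀ y, HasFDerivAt (gradient C) (fderiv ℝ (gradient C) y) y :=
    fun y => (hg1.differentiable one_ne_zero y).hasFDerivAt
  have huIcc : Set.uIcc (0:ℝ) T = Set.Icc 0 T := Set.uIcc_of_le hT.le
  set B : ℝ → ℝ := fun t =>
    ⟪gradient C (h t), fderiv ℝ (gradient C) (h t) (gradient C (h t))⟫
      / ‖gradient C (h t)‖ ^ 2 with hBdef
  -- derivative of log-norm along the trajectory
  have hkey : ∀ t ∈ Set.uIcc (0:ℝ) T,
      HasDerivAt (fun s => Real.log ‖gradient C (h s)‖) (-B t) t := by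
    intro t ht
    rw [huIcc] at ht
    exact log_norm_hasDerivAt (hgd _) (hflow t ht) (hne t ht)
  -- continuity facts
  have hconth : ContinuousOn h (Set.Icc 0 T) :=
    fun t ht => (hflow t ht).continuousAt.continuousWithinAt
  have hcontG : ContinuousOn (fun t => gradient C (h t)) (Set.Icc 0 T) :=
    (hg1.continuous).comp_continuousOn hconth
  have hcontDg : ContinuousOn (fun t => fderiv ℝ (gradient C) (h t)) (Set.Icc 0 T) :=
    (hg1.continuous_fderiv one_ne_zero).comp_continuousOn hconth
  have hcontB : ContinuousOn B (Set.Icc 0 T) := by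
    apply ContinuousOn.div
    · exact ContinuousOn.inner hcontG (hcontDg.clm_apply hcontG)
    · exact hcontG.norm.pow 2
    · intro t ht
      exact pow_ne_zero _ (norm_ne_zero_iff.mpr (hne t ht))
  have hcontA : ContinuousOn (fun t => laplacian C (h t)) (Set.Icc 0 T) := by
    have heqA : (fun t => laplacian C (h t))
        = fun t => ∑ i, fderiv ℝ (gradient C) (h t) (EuclideanSpace.single i 1) i := by
      funext t
      rw [laplacian_eq_div_grad, div_eq_sum (hgd _)]
    rw [heqA]
    apply continuousOn_finset_sum
    intro i _
    exact (EuclideanSpace.proj (𝕜 := ℝ) i).continuous.comp_continuousOn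
      (hcontDg.clm_apply continuousOn_const)
  -- integrability
  have hBint : IntervalIntegrable B MeasureTheory.volume 0 T :=
    (huIcc ▸ hcontB).intervalIntegrable
  have hAint : IntervalIntegrable (fun t => laplacian C (h t)) MeasureTheory.volume 0 T :=
    (huIcc ▸ hcontA).intervalIntegrable
  -- fundamental theorem of calculus
  have hFTC : ∫ t in (0:ℝ)..T, -B t
      = Real.log ‖gradient C (h T)‖ - Real.log ‖gradient C (h 0)‖ :=
    intervalIntegral.integral_eq_sub_of_hasDerivAt hkey hBint.neg
  have hIB : ∫ t in (0:ℝ)..T, B t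
      = Real.log ‖gradient C (h 0)‖ - Real.log ‖gradient C (h T)‖ := by
    have := hFTC
    rw [intervalIntegral.integral_neg] at this
    linarith
  -- pointwise identity under the second integral
  have hident : ∫ t in (0:ℝ)..T,
      divergence (fun x => ‖gradient C x‖⁻¹ • gradient C x) (h t) * ‖gradient C (h t)‖
      = ∫ t in (0:ℝ)..T, (laplacian C (h t) - B t) := by
    apply intervalIntegral.integral_congr
    intro t ht
    rw [huIcc] at ht
    have := div_identity (hgd (h t)) (hne t ht)
    simp only [laplacian_eq_div_grad]
    exact this
  have hsub : ∫ t in (0:ℝ)..T, (laplacian C (h t) - B t)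
      = (∫ t in (0:ℝ)..T, laplacian C (h t)) - ∫ t in (0:ℝ)..T, B t :=
    intervalIntegral.integral_sub hAint hBint
  have hlogdiv : Real.log (‖gradient C (h 0)‖ / ‖gradient C (h T)‖)
      = Real.log ‖gradient C (h 0)‖ - Real.log ‖gradient C (h T)‖ :=
    Real.log_div (norm_ne_zero_iff.mpr (hne 0 (Set.left_mem_Icc.mpr hT.le)))
      (norm_ne_zero_iff.mpr (hne T (Set.right_mem_Icc.mpr hT.le)))
  rw [hident, hsub, hIB, hlogdiv]
  ring
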